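/- Let p be a prime, V a vector space over the prime field F_p = ℤ/pℤ, and let (A, m_1) and (B, m_2) be multisets in V with d(A) = r and d(B) = s. Define the sumset multiset (A+B, m_3) by m_3(c) = max{ m_1(a) + m_2(b) − 1 : a ∈ A, b ∈ B, a + b = c } for c ∈ A + B. Then d(A+B) ≥ β_p(r, s). -/

import Mathlib

open Finset Pointwise

/-- The triple `(r, s, N)` satisfies the Hopf–Stiefel condition for the prime `p`:
`p ∣ C(N, k)` for every integer `k` with `N - r < k < s`. -/
def hopfStiefelCond (p r s N : ℕ) : Prop :=
  ∀ k : ℕ, (N : ℤ) - (r : ℤ) < (k : ℤ) → k < s → p ∣ N.choose k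

/-- The generalized Hopf–Stiefel number `β_p(r, s)`: the smallest `N` for which
`(r, s, N)` satisfies the Hopf–Stiefel condition for `p`. -/
noncomputable def betaHS (p r s : ℕ) : ℕ :=
  sInf {N : ℕ | hopfStiefelCond p r s N}


namespace EK19
open Polynomial

section CN
variable {K : Type*} [Field K]

noncomputable def ev (a b : K) : K[X][X] →+* K :=
  eval₂RingHom (evalRingHom b) a

lemma ev_X (a b : K) : ev a b X = a := eval₂_X _ _
lemma ev_C (a b : K) (u : K[X]) : ev a b (C u) = u.eval b := eval₂_C _ _

noncomputable def coeff2 (f : K[X][X]) (i j : ℕ) : K := (f.coeff i).coeff j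

def tdb (f : K[X][X]) (D : ℕ) : Prop := ∀ i j, coeff2 f i j ≠ 0 → i + j ≤ D

lemma geom_decomp {S : Type*} [CommRing S] (g : S[X]) (t : S) :
    ∃ q : S[X], g = (X - C t) * q + C (g.eval t) ∧
      ∀ m, q.coeff m = ∑ i ∈ Finset.range (g.natDegree + 1),
        if m < i then g.coeff i * t ^ (i - 1 - m) else 0 := by
  refine ⟨∑ i ∈ Finset.range (g.natDegree + 1),
      C (g.coeff i) * ∑ j ∈ Finset.range i, X ^ j * (C t) ^ (i - 1 - j), ?_, ?_⟩
  · have h1 : (X - C t) * ∑ i ∈ Finset.range (g.natDegree + 1),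
        C (g.coeff i) * ∑ j ∈ Finset.range i, X ^ j * (C t) ^ (i - 1 - j)
        = ∑ i ∈ Finset.range (g.natDegree + 1),
          C (g.coeff i) * (X ^ i - (C t) ^ i) := by
      rw [Finset.mul_sum]
      refine Finset.sum_congr rfl fun i _ => ?_
      rw [mul_left_comm, mul_comm (X - C t), geom_sum₂_mul]
    have h2 : (C (g.eval t) : S[X]) = ∑ i ∈ Finset.range (g.natDegree + 1),
        C (g.coeff i) * (C t) ^ i := by
      rw [eval_eq_sum_range, map_sum]
      exact Finset.sum_congr rfl fun i _ => by rw [map_mul, map_pow]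
    rw [h1, h2, ← Finset.sum_add_distrib]
    conv_lhs => rw [g.as_sum_range' (g.natDegree + 1) (Nat.lt_succ_self _)]
    refine Finset.sum_congr rfl fun i _ => ?_
    rw [← C_mul_X_pow_eq_monomial]
    ring
  · intro m
    rw [finset_sum_coeff]
    refine Finset.sum_congr rfl fun i _ => ?_
    rw [coeff_C_mul, finset_sum_coeff]
    have : ∀ j ∈ Finset.range i, (X ^ j * (C t) ^ (i - 1 - j)).coeff m
        = if j = m then t ^ (i - 1 - m) else 0 := by
      intro j _
      rw [← C_pow, mul_comm, coeff_C_mul, coeff_X_pow]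
      by_cases h : m = j
      · subst h; simp
      · simp [h, Ne.symm h]
    rw [Finset.sum_congr rfl this, Finset.sum_ite_eq' (Finset.range i) m
      (fun _ => t ^ (i - 1 - m))]
    simp [Finset.mem_range, mul_ite]

lemma ev_eval (a₀ b : K) (f : K[X][X]) : (f.eval (C a₀)).eval b = ev a₀ b f := by
  have h := hom_eval₂ (p := f) (f := RingHom.id K[X]) (g := evalRingHom b) (x := C a₀)
  simp only [RingHom.comp_id, coe_evalRingHom, eval_C] at h
  exact h

theorem CN2 : ∀ (D d₁ d₂ : ℕ), d₁ + d₂ = D → ∀ f : K[X][X], tdb f D →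
    ∀ A B : Finset K, d₁ < A.card → d₂ < B.card →
    (∀ a ∈ A, ∀ b ∈ B, ev a b f = 0) → coeff2 f d₁ d₂ = 0 := by
  classical
  intro D
  induction D with
  | zero =>
    intro d₁ d₂ hd f htdb A B hA hB hvan
    obtain ⟨rfl, rfl⟩ : d₁ = 0 ∧ d₂ = 0 := by omega
    obtain ⟨a, ha⟩ := Finset.card_pos.mp (by omega : 0 < A.card)
    obtain ⟨b, hb⟩ := Finset.card_pos.mp (by omega : 0 < B.card)
    have hf : f = C (C (coeff2 f 0 0)) := by
      apply Polynomial.ext; intro i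
      apply Polynomial.ext; intro j
      by_cases hi : i = 0
      · subst hi
        by_cases hj : j = 0
        · subst hj; simp [coeff2]
        · have h0 : coeff2 f 0 j = 0 := by
            by_contra hc; have := htdb 0 j hc; omega
          rw [coeff2] at h0
          simp [h0, coeff_C, hj]
      · have h0 : coeff2 f i j = 0 := by
          by_contra hc; have := htdb i j hc; omega
        rw [coeff2] at h0
        simp [h0, coeff_C, hi]
    have := hvan a ha b hb
    rw [hf, ev_C, eval_C] at this
    exact this
  | succ D ih =>
    intro d₁ d₂ hd f htdb A B hA hB hvan
    by_cases hd₁ : d₁ = 0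
    · -- reduce in the second (inner) variable
      subst hd₁
      have hd₂ : d₂ = D + 1 := by omega
      subst hd₂
      obtain ⟨b₀, hb₀⟩ := Finset.card_pos.mp (by omega : 0 < B.card)
      have H : ∀ i : ℕ, ∃ qi : K[X], f.coeff i = (X - C b₀) * qi + C ((f.coeff i).eval b₀) ∧
          ∀ m, qi.coeff m = ∑ i' ∈ Finset.range ((f.coeff i).natDegree + 1),
            if m < i' then (f.coeff i).coeff i' * b₀ ^ (i' - 1 - m) else 0 :=
        fun i => geom_decomp (f.coeff i) b₀
      choose Q hQ hQc using H
      have hQ0 : ∀ i, f.natDegree < i → Q i = 0 := by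
        intro i hi
        have h0 : f.coeff i = 0 := coeff_eq_zero_of_natDegree_lt hi
        have := hQ i
        rw [h0] at this
        simp only [eval_zero, map_zero, add_zero] at this
        have hX : (X - C b₀ : K[X]) ≠ 0 := X_sub_C_ne_zero b₀
        rcases mul_eq_zero.mp this.symm with h | h
        · exact absurd h hX
        · exact h
      set q' : K[X][X] := ∑ i ∈ Finset.range (f.natDegree + 1), monomial i (Q i) with hq'def
      have hq'c : ∀ i, q'.coeff i = Q i := by
        intro i
        rw [hq'def, finset_sum_coeff]
        by_cases hi : i ≤ f.natDegree
        · rw [Finset.sum_eq_single i]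
          · simp
          · intro j _ hj; simp [coeff_monomial, hj]
          · intro h; exact absurd (Finset.mem_range.mpr (by omega)) h
        · rw [hQ0 i (by omega), Finset.sum_eq_zero]
          intro j hj
          rw [coeff_monomial, if_neg (by simp only [Finset.mem_range] at hj; omega)]
      have hid : ∀ i, f.coeff i = (X - C b₀) * q'.coeff i + C ((f.coeff i).eval b₀) := by
        intro i; rw [hq'c]; exact hQ i
      have htq' : tdb q' D := by
        intro m l hml
        by_contra hcon
        apply hml
        rw [coeff2, hq'c, hQc]
        apply Finset.sum_eq_zero
        intro i' _
        by_cases him : l < i'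
        · rw [if_pos him]
          have h0 : coeff2 f m i' = 0 := by
            by_contra hc; have := htdb m i' hc; omega
          rw [coeff2] at h0; rw [h0, zero_mul]
        · rw [if_neg him]
      have hvq' : ∀ a ∈ A, ∀ b ∈ B.erase b₀, ev a b q' = 0 := by
        intro a ha b hb
        have hbB := Finset.mem_of_mem_erase hb
        have hbne : b ≠ b₀ := Finset.ne_of_mem_erase hb
        have h1 : ev a b f = 0 := hvan a ha b hbB
        have h2 : ev a b₀ f = 0 := hvan a ha b₀ hb₀
        -- expand f via coefficients: f = C (X - C b₀) * q' + rE
        have hrE : ∀ i, (∑ i ∈ Finset.range (f.natDegree + 1),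
            monomial i (C ((f.coeff i).eval b₀))).coeff i = C ((f.coeff i).eval b₀) := by
          intro i
          rw [finset_sum_coeff]
          by_cases hi : i ≤ f.natDegree
          · rw [Finset.sum_eq_single i]
            · rw [coeff_monomial, if_pos rfl]
            · intro j _ hj; simp [coeff_monomial, hj]
            · intro h; exact absurd (Finset.mem_range.mpr (by omega)) h
          · rw [coeff_eq_zero_of_natDegree_lt (by omega : f.natDegree < i)]
            rw [eval_zero, map_zero, Finset.sum_eq_zero]
            intro j hj
            rw [coeff_monomial, if_neg (by simp only [Finset.mem_range] at hj; omega)]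
        have hfid : f = C (X - C b₀) * q' +
            ∑ i ∈ Finset.range (f.natDegree + 1), monomial i (C ((f.coeff i).eval b₀)) := by
          apply Polynomial.ext; intro i
          rw [coeff_add, coeff_C_mul, hrE i]
          exact hid i
        have hevr : ev a b (∑ i ∈ Finset.range (f.natDegree + 1),
            monomial i (C ((f.coeff i).eval b₀))) = ev a b₀ f := by
          rw [map_sum]
          have : ∀ i ∈ Finset.range (f.natDegree + 1),
              ev a b (monomial i (C ((f.coeff i).eval b₀))) = (f.coeff i).eval b₀ * a ^ i := by
            intro i _
            show eval₂ (evalRingHom b) a (monomial i (C ((f.coeff i).eval b₀))) = _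
            rw [eval₂_monomial]
            simp
          rw [Finset.sum_congr rfl this]
          show _ = eval₂ (evalRingHom b₀) a f
          rw [eval₂_eq_sum_range]
          rfl
        rw [hfid, map_add, map_mul, hevr, h2, add_zero, ev_C] at h1
        rw [eval_sub, eval_X, eval_C] at h1
        rcases mul_eq_zero.mp h1 with h | h
        · exact absurd (sub_eq_zero.mp h) hbne
        · exact h
      have hcard : D < (B.erase b₀).card := by
        rw [Finset.card_erase_of_mem hb₀]; omega
      have h0 := ih 0 D (by omega) q' htq' A (B.erase b₀) hA hcard hvq'
      have hz : coeff2 q' 0 (D + 1) = 0 := by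
        by_contra hc; have := htq' _ _ hc; omega
      rw [coeff2, hid 0, coeff_add, coeff_C, if_neg (by omega : ¬ D + 1 = 0), add_zero,
        sub_mul, coeff_sub, coeff_X_mul, coeff_C_mul]
      rw [coeff2] at h0 hz
      rw [h0, hz, mul_zero, sub_zero]
    · -- reduce in the first (outer) variable
      obtain ⟨d₁', rfl⟩ := Nat.exists_eq_succ_of_ne_zero hd₁
      obtain ⟨a₀, ha₀⟩ := Finset.card_pos.mp (by omega : 0 < A.card)
      obtain ⟨q, hq, hqc⟩ := geom_decomp f (C a₀ : K[X])
      have htq : tdb q D := by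
        intro m l hml
        by_contra hcon
        apply hml
        rw [coeff2, hqc m, finset_sum_coeff]
        apply Finset.sum_eq_zero
        intro i _
        by_cases him : m < i
        · rw [if_pos him, ← C_pow, coeff_mul_C]
          have h0 : coeff2 f i l = 0 := by
            by_contra hc; have := htdb i l hc; omega
          rw [coeff2] at h0; rw [h0, zero_mul]
        · rw [if_neg him, coeff_zero]
      have hvq : ∀ a ∈ A.erase a₀, ∀ b ∈ B, ev a b q = 0 := by
        intro a ha b hb
        have haA := Finset.mem_of_mem_erase ha
        have hane : a ≠ a₀ := Finset.ne_of_mem_erase ha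
        have h1 : ev a b f = 0 := hvan a haA b hb
        have h2 : ev a₀ b f = 0 := hvan a₀ ha₀ b hb
        rw [hq, map_add, map_mul, map_sub, ev_X, ev_C, ev_C, eval_C, ev_eval, h2,
          add_zero] at h1
        rcases mul_eq_zero.mp h1 with h | h
        · exact absurd (sub_eq_zero.mp h) hane
        · exact h
      have hcard : d₁' < (A.erase a₀).card := by
        rw [Finset.card_erase_of_mem ha₀]; omega
      have h0 := ih d₁' d₂ (by omega) q htq (A.erase a₀) B hcard hB hvq
      have hz : coeff2 q (d₁' + 1) d₂ = 0 := by
        by_contra hc; have := htq _ _ hc; omega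
      rw [coeff2, hq, coeff_add, coeff_C, if_neg (by omega : ¬ d₁' + 1 = 0), add_zero,
        sub_mul, coeff_sub, coeff_X_mul, coeff_C_mul, coeff_sub, coeff_C_mul]
      rw [coeff2] at h0 hz
      rw [h0, hz, mul_zero, sub_zero]

lemma tdb_mul {f g : K[X][X]} {m n : ℕ} (hf : tdb f m) (hg : tdb g n) :
    tdb (f * g) (m + n) := by
  intro i j hij
  rw [coeff2, coeff_mul, finset_sum_coeff] at hij
  obtain ⟨x, hx, hne⟩ := Finset.exists_ne_zero_of_sum_ne_zero hij
  rw [coeff_mul] at hne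
  obtain ⟨y, hy, hne2⟩ := Finset.exists_ne_zero_of_sum_ne_zero hne
  have h1 : (f.coeff x.1).coeff y.1 ≠ 0 := fun h => hne2 (by rw [h, zero_mul])
  have h2 : (g.coeff x.2).coeff y.2 ≠ 0 := fun h => hne2 (by rw [h, mul_zero])
  have e1 := hf _ _ h1
  have e2 := hg _ _ h2
  have hxs := Finset.HasAntidiagonal.mem_antidiagonal.mp hx
  have hys := Finset.HasAntidiagonal.mem_antidiagonal.mp hy
  omega

lemma factor_coeff (c : K) : ∀ i, (X + C X - C (C c) : K[X][X]).coeff i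
    = if i = 0 then (X - C c : K[X]) else if i = 1 then (1 : K[X]) else 0 := by
  intro i
  rcases i with _ | _ | i <;>
    simp [coeff_X, coeff_one, coeff_C, Nat.succ_ne_zero]

lemma tdb_factor (c : K) : tdb (X + C X - C (C c)) 1 := by
  intro i j h
  by_contra hcon
  apply h
  rw [coeff2, factor_coeff]
  rcases Nat.eq_zero_or_pos i with hi | hi
  · subst hi
    rw [if_pos rfl, coeff_sub, coeff_X, coeff_C, if_neg (by omega), if_neg (by omega),
      sub_zero]
  · rw [if_neg (by omega)]
    by_cases hi1 : i = 1
    · rw [if_pos hi1, coeff_one, if_neg (by omega)]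
    · rw [if_neg hi1, coeff_zero]

/-- the EK polynomial -/
noncomputable def ekpoly (T : Finset K) : K[X][X] := ∏ c ∈ T, (X + C X - C (C c))

lemma tdb_ekpoly (T : Finset K) : tdb (ekpoly T) T.card := by
  classical
  induction T using Finset.induction_on with
  | empty =>
    intro i j h
    by_contra hcon
    apply h
    have h1 : ekpoly (∅ : Finset K) = 1 := by rw [ekpoly, Finset.prod_empty]
    rw [coeff2, h1]
    rcases Nat.eq_zero_or_pos i with hi | hi
    · subst hi
      rw [coeff_one, if_pos rfl]
      rw [coeff_one]
      rw [if_neg (by omega)]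
    · rw [coeff_one, if_neg (by omega), coeff_zero]
  | @insert a T ha ih =>
    have hins : ekpoly (insert a T) = (X + C X - C (C a)) * ekpoly T := by
      simp only [ekpoly]; rw [Finset.prod_insert ha]
    rw [hins, Finset.card_insert_of_notMem ha]
    have := tdb_mul (tdb_factor a) ih
    rwa [add_comm 1 T.card] at this

lemma coeff2_ekpoly (T : Finset K) :
    ∀ i j, i + j = T.card → coeff2 (ekpoly T) i j = (T.card.choose i : K) := by
  classical
  induction T using Finset.induction_on with
  | empty =>
    intro i j hij
    simp only [Finset.card_empty] at hij
    obtain ⟨rfl, rfl⟩ : i = 0 ∧ j = 0 := by omega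
    simp [ekpoly, coeff2]
  | @insert a T ha ih =>
    intro i j hij
    rw [Finset.card_insert_of_notMem ha] at hij ⊢
    have hins : ekpoly (insert a T) = (X + C X - C (C a)) * ekpoly T := by
      simp only [ekpoly]; rw [Finset.prod_insert ha]
    rw [hins]
    set g := ekpoly T with hg
    have hsplit : coeff2 ((X + C X - C (C a)) * g) i j
        = (if i = 0 then 0 else coeff2 g (i-1) j)
          + (if j = 0 then 0 else coeff2 g i (j-1)) - a * coeff2 g i j := by
      have houter : ((X + C X - C (C a)) * g).coeff i
          = (if i = 0 then 0 else g.coeff (i-1)) + X * g.coeff i - C a * g.coeff i := by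
        rw [sub_mul, add_mul, coeff_sub, coeff_add, coeff_C_mul, coeff_C_mul]
        congr 2
        rcases i with _ | i
        · rw [if_pos rfl, mul_coeff_zero, coeff_X_zero, zero_mul]
        · rw [coeff_X_mul, if_neg (Nat.succ_ne_zero i), Nat.add_sub_cancel]
      rw [coeff2, houter, coeff_sub, coeff_add, coeff_C_mul]
      congr 2
      · rcases Nat.eq_zero_or_pos i with hi | hi
        · simp [hi]
        · rw [if_neg (by omega), if_neg (by omega)]; rfl
      · rcases j with _ | j
        · rw [if_pos rfl, mul_coeff_zero, coeff_X_zero, zero_mul]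
        · rw [coeff_X_mul, if_neg (Nat.succ_ne_zero j)]; rfl
    have hz : coeff2 g i j = 0 := by
      by_contra hc
      have := tdb_ekpoly T i j hc
      omega
    rw [hsplit, hz, mul_zero, sub_zero]
    rcases Nat.eq_zero_or_pos i with hi | hi
    · subst hi
      rw [if_pos rfl, zero_add, if_neg (by omega), ih 0 (j-1) (by omega)]
      simp
    · rcases Nat.eq_zero_or_pos j with hj | hj
      · subst hj
        rw [if_neg (by omega), if_pos rfl, add_zero, ih (i-1) 0 (by omega)]
        have : i = T.card + 1 := by omega
        subst this
        simp [Nat.choose_self]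
      · obtain ⟨i', rfl⟩ := Nat.exists_eq_succ_of_ne_zero (by omega : i ≠ 0)
        rw [if_neg (by omega), if_neg (by omega)]
        simp only [Nat.succ_sub_one, Nat.succ_eq_add_one]
        rw [ih i' j (by omega), ih (i' + 1) (j - 1) (by omega), Nat.choose_succ_succ]
        push_cast
        ring

lemma ekfield (p : ℕ) [CharP K p] [DecidableEq K] (A B : Finset K) (hA : A.Nonempty) (hB : B.Nonempty) :
    hopfStiefelCond p A.card B.card (A + B).card := by
  classical
  intro k hk1 hk2
  set D := (A + B).card with hD
  have hsD : B.card ≤ D := Finset.card_le_card_add_left (t := B) hA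
  have hkD : k ≤ D := by omega
  have hd₁A : D - k < A.card := by omega
  obtain ⟨A₀, hA₀sub, hA₀card⟩ := Finset.exists_subset_card_eq (s := A) (n := D - k + 1) (by omega)
  obtain ⟨B₀, hB₀sub, hB₀card⟩ := Finset.exists_subset_card_eq (s := B) (n := k + 1) (by omega)
  have hvan : ∀ a ∈ A₀, ∀ b ∈ B₀, ev a b (ekpoly (A + B)) = 0 := by
    intro a ha b hb
    have hab : a + b ∈ A + B := Finset.add_mem_add (hA₀sub ha) (hB₀sub hb)
    rw [ekpoly, map_prod]
    apply Finset.prod_eq_zero hab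
    rw [map_sub, map_add, ev_X, ev_C, ev_C, eval_X, eval_C]
    ring
  have h0 := CN2 D (D - k) k (by omega) (ekpoly (A + B)) (by rw [hD]; exact tdb_ekpoly _)
      A₀ B₀ (by omega) (by omega) hvan
  rw [coeff2_ekpoly (A + B) (D - k) k (by omega)] at h0
  have hdvd : p ∣ D.choose (D - k) := by
    rw [← CharP.cast_eq_zero_iff K p]
    exact_mod_cast h0
  rw [← Nat.choose_symm hkD]
  exact hdvd

end CN

section PVAL
variable (p : ℕ)

/-- base-p valuation of a digit vector -/
def pval (t : ℕ) (x : Fin t → ZMod p) : ℕ := ∑ i, (x i).val * p ^ (i : ℕ)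

lemma pval_succ (t : ℕ) (x : Fin (t+1) → ZMod p) :
    pval p (t+1) x = (x 0).val + p * pval p t (fun i => x i.succ) := by
  rw [pval, Fin.sum_univ_succ]
  simp only [Fin.val_zero, pow_zero, mul_one]
  rw [pval, Finset.mul_sum]
  congr 1
  refine Finset.sum_congr rfl fun i _ => ?_
  rw [Fin.val_succ, pow_succ]
  ring

variable [hp : Fact p.Prime]

lemma pval_lt (t : ℕ) (x : Fin t → ZMod p) : pval p t x < p ^ t := by
  induction t with
  | zero => simp [pval]
  | succ t ih =>
    rw [pval_succ, pow_succ]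
    have h1 : (x 0).val < p := ZMod.val_lt _
    have h2 := ih (fun i => x i.succ)
    nlinarith [hp.out.pos]

lemma pval_inj (t : ℕ) : Function.Injective (pval p t) := by
  induction t with
  | zero => intro x y _; funext i; exact absurd i.2 (by omega)
  | succ t ih =>
    intro x y hxy
    rw [pval_succ, pval_succ] at hxy
    have h1 : (x 0).val < p := ZMod.val_lt _
    have h2 : (y 0).val < p := ZMod.val_lt _
    have hmod : (x 0).val = (y 0).val := by
      have := congrArg (· % p) hxy
      simpa [Nat.add_mul_mod_self_left, Nat.mod_eq_of_lt h1, Nat.mod_eq_of_lt h2] using this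
    have h0 : x 0 = y 0 := ZMod.val_injective p hmod
    have htail : pval p t (fun i => x i.succ) = pval p t (fun i => y i.succ) := by
      have hppos : 0 < p := hp.out.pos
      rw [hmod] at hxy
      have := Nat.eq_of_mul_eq_mul_left hppos (by omega : p * pval p t (fun i => x i.succ)
        = p * pval p t (fun i => y i.succ))
      exact this
    have := ih htail
    funext i
    rcases Fin.eq_zero_or_eq_succ i with rfl | ⟨j, rfl⟩
    · exact h0
    · exact congrFun this j

lemma pval_surj (t : ℕ) : ∀ v < p ^ t, ∃ x, pval p t x = v := by
  induction t with
  | zero =>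
    intro v hv
    refine ⟨fun i => 0, ?_⟩
    have hv0 : v = 0 := by simpa using hv
    simp [pval, hv0]
  | succ t ih =>
    intro v hv
    have hppos : 0 < p := hp.out.pos
    have hdiv : v / p < p ^ t := by
      rw [Nat.div_lt_iff_lt_mul hppos]
      calc v < p ^ (t+1) := hv
        _ = p ^ t * p := pow_succ p t
    obtain ⟨x', hx'⟩ := ih (v / p) hdiv
    refine ⟨Fin.cons ((v % p : ℕ) : ZMod p) x', ?_⟩
    rw [pval_succ]
    simp only [Fin.cons_zero, Fin.cons_succ]
    rw [ZMod.val_natCast_of_lt (Nat.mod_lt _ hppos)]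
    have heta : pval p t (fun i => x' i) = v / p := hx'
    rw [heta, Nat.mod_add_div]

lemma pval_add_le (t : ℕ) (x y : Fin t → ZMod p) :
    pval p t (x + y) ≤ pval p t x + pval p t y := by
  rw [pval, pval, pval, ← Finset.sum_add_distrib]
  refine Finset.sum_le_sum fun i _ => ?_
  rw [← add_mul]
  exact Nat.mul_le_mul_right _ (ZMod.val_add_le _ _)

/-- the initial segment of size `m` (when `m ≤ p^t`) -/
def pseg (t m : ℕ) : Finset (Fin t → ZMod p) := Finset.univ.filter (fun x => pval p t x < m)

lemma mem_pseg {t m : ℕ} {x : Fin t → ZMod p} : x ∈ pseg p t m ↔ pval p t x < m := by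
  simp [pseg]

lemma card_pseg_le (t m : ℕ) : (pseg p t m).card ≤ m := by
  have h := Finset.card_le_card_of_injOn (s := pseg p t m) (t := Finset.range m)
    (fun x => pval p t x) (fun x hx => Finset.mem_range.mpr ((mem_pseg p).mp hx))
    (fun x _ y _ hxy => pval_inj p t hxy)
  simpa using h

lemma card_pseg (t m : ℕ) (h : m ≤ p ^ t) : (pseg p t m).card = m := by
  have h2 : (pseg p t m).card = (Finset.range m).card := by
    apply Finset.card_bij (fun x _ => pval p t x)
    · exact fun x hx => Finset.mem_range.mpr ((mem_pseg p).mp hx)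
    · exact fun x _ y _ hxy => pval_inj p t hxy
    · intro v hv
      have hvm : v < m := Finset.mem_range.mp hv
      obtain ⟨x, hx⟩ := pval_surj p t v (lt_of_lt_of_le hvm h)
      exact ⟨x, (mem_pseg p).mpr (by omega), hx⟩
  simpa using h2

lemma zero_mem_pseg (t m : ℕ) (h : 1 ≤ m) : 0 ∈ pseg p t m := by
  rw [mem_pseg]
  have : pval p t (0 : Fin t → ZMod p) = 0 := by
    simp [pval]
  omega

end PVAL

lemma span_embed (p : ℕ) [Fact p.Prime] {M : Type*} [AddCommGroup M] [Module (ZMod p) M]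
    (s : Set M) (hs : s.Finite) :
    ∃ φ : (Submodule.span (ZMod p) s) →+
        GaloisField p (Module.finrank (ZMod p) (Submodule.span (ZMod p) s) + 1),
      Function.Injective φ := by
  haveI : FiniteDimensional (ZMod p) (Submodule.span (ZMod p) s) :=
    FiniteDimensional.span_of_finite _ hs
  set W := Submodule.span (ZMod p) s
  set n := Module.finrank (ZMod p) W with hn
  set K := GaloisField p (n + 1) with hKdef
  have hK : Module.finrank (ZMod p) K = n + 1 := GaloisField.finrank p (Nat.succ_ne_zero n)
  let bW : Module.Basis (Fin n) (ZMod p) W := Module.finBasis _ _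
  let bK : Module.Basis (Fin (Module.finrank (ZMod p) K)) (ZMod p) K := Module.finBasis _ _
  let ι : Fin n → Fin (Module.finrank (ZMod p) K) :=
    fun i => Fin.castLE (by rw [hK]; exact Nat.le_succ n) i
  let e : W →ₗ[ZMod p] K := bW.constr (ZMod p) (fun i => bK (ι i))
  refine ⟨e.toAddMonoidHom, ?_⟩
  have hli : LinearIndependent (ZMod p) (fun i : Fin n => bK (ι i)) :=
    bK.linearIndependent.comp ι (Fin.castLE_injective _)
  intro x y hxy
  have hxy' : e x = e y := hxy
  have h0 : e (x - y) = 0 := by rw [map_sub, hxy', sub_self]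
  have h0' : ∑ i, bW.equivFun (x - y) i • bK (ι i) = 0 := by
    rw [← Module.Basis.constr_apply_fintype (S := ZMod p) (b := bW) (f := fun i => bK (ι i))
      (x := x - y)]
    exact h0
  have hrep := Fintype.linearIndependent_iff.mp hli (fun i => bW.equivFun (x - y) i) h0'
  have hz : x - y = 0 := by
    have hx := Module.Basis.sum_equivFun bW (x - y)
    rw [← hx]
    apply Finset.sum_eq_zero
    intro i _
    rw [show bW.equivFun (x - y) i = 0 from hrep i, zero_smul]
  have := sub_eq_zero.mp hz
  exact this

end EK19

/-- The Eliahou–Kervaire theorem for multisets: for multisets `(A, m₁)` and `(B, m₂)` in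
a vector space `V` over the prime field `F_p = ℤ/pℤ`, with `d(A) = r`, `d(B) = s`, and
sumset multiset `(A + B, m₃)` given by
`m₃(c) = max{m₁(a) + m₂(b) - 1 : a ∈ A, b ∈ B, a + b = c}`, we have
`d(A + B) ≥ β_p(r, s)`. -/
theorem stmt_19 (p : ℕ) (hp : p.Prime)
    (V : Type*) [AddCommGroup V] [Module (ZMod p) V] [DecidableEq V]
    (A B : Finset V) (hA : A.Nonempty) (hB : B.Nonempty)
    (m₁ m₂ : V → ℕ) (hm₁ : ∀ a ∈ A, 1 ≤ m₁ a) (hm₂ : ∀ b ∈ B, 1 ≤ m₂ b)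
    (r s : ℕ) (hr : r = ∑ a ∈ A, m₁ a) (hs : s = ∑ b ∈ B, m₂ b)
    (m₃ : V → ℕ)
    (hm₃ : ∀ c ∈ A + B, m₃ c =
      ((A ×ˢ B).filter fun ab => ab.1 + ab.2 = c).sup fun ab => m₁ ab.1 + m₂ ab.2 - 1) :
    betaHS p r s ≤ ∑ c ∈ A + B, m₃ c := by
  classical
  haveI : Fact p.Prime := ⟨hp⟩
  set t := r + s with ht
  have hpt : r + s ≤ p ^ t := by
    calc r + s ≤ 2 ^ (r + s) := (Nat.lt_two_pow_self).le
    _ ≤ p ^ t := Nat.pow_le_pow_left hp.two_le _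
  set VV := V × (Fin t → ZMod p) with hVV
  set A' : Finset VV := A.biUnion (fun a => (EK19.pseg p t (m₁ a)).image (fun x => (a, x)))
    with hA'def
  set B' : Finset VV := B.biUnion (fun b => (EK19.pseg p t (m₂ b)).image (fun x => (b, x)))
    with hB'def
  set T' : Finset VV := (A + B).biUnion
    (fun c => (EK19.pseg p t (m₃ c)).image (fun x => (c, x))) with hT'def
  have memA' : ∀ z : VV, z ∈ A' ↔ z.1 ∈ A ∧ EK19.pval p t z.2 < m₁ z.1 := by
    intro z
    rw [hA'def]
    simp only [Finset.mem_biUnion, Finset.mem_image, EK19.mem_pseg]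
    constructor
    · rintro ⟨a, ha, x, hx, rfl⟩; exact ⟨ha, hx⟩
    · rintro ⟨h1, h2⟩; exact ⟨z.1, h1, z.2, h2, rfl⟩
  have memB' : ∀ z : VV, z ∈ B' ↔ z.1 ∈ B ∧ EK19.pval p t z.2 < m₂ z.1 := by
    intro z
    rw [hB'def]
    simp only [Finset.mem_biUnion, Finset.mem_image, EK19.mem_pseg]
    constructor
    · rintro ⟨b, hb, x, hx, rfl⟩; exact ⟨hb, hx⟩
    · rintro ⟨h1, h2⟩; exact ⟨z.1, h1, z.2, h2, rfl⟩
  have cardA' : A'.card = r := by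
    rw [hA'def, Finset.card_biUnion]
    · rw [hr]
      refine Finset.sum_congr rfl fun a ha => ?_
      rw [Finset.card_image_of_injective _ (fun x y hxy => congrArg Prod.snd hxy)]
      refine EK19.card_pseg p t (m₁ a) (le_trans ?_ (le_trans (le_add_right le_rfl) hpt))
      rw [hr]
      exact Finset.single_le_sum (f := m₁) (fun _ _ => Nat.zero_le _) ha
    · intro a ha b hb hab
      simp only [Finset.disjoint_left, Finset.mem_image]
      rintro z ⟨x, hx, rfl⟩ ⟨y, hy, hzy⟩
      exact hab (congrArg Prod.fst hzy).symm
  have cardB' : B'.card = s := by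
    rw [hB'def, Finset.card_biUnion]
    · rw [hs]
      refine Finset.sum_congr rfl fun b hb => ?_
      rw [Finset.card_image_of_injective _ (fun x y hxy => congrArg Prod.snd hxy)]
      refine EK19.card_pseg p t (m₂ b) (le_trans ?_ (le_trans (le_add_left le_rfl) hpt))
      rw [hs]
      exact Finset.single_le_sum (f := m₂) (fun _ _ => Nat.zero_le _) hb
    · intro a ha b hb hab
      simp only [Finset.disjoint_left, Finset.mem_image]
      rintro z ⟨x, hx, rfl⟩ ⟨y, hy, hzy⟩
      exact hab (congrArg Prod.fst hzy).symm
  have hA'ne : A'.Nonempty := by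
    obtain ⟨a, ha⟩ := hA
    exact ⟨(a, 0), (memA' (a, 0)).mpr ⟨ha, by
      show EK19.pval p t (0 : Fin t → ZMod p) < m₁ a
      have h0 : EK19.pval p t (0 : Fin t → ZMod p) = 0 := by simp [EK19.pval]
      have := hm₁ a ha
      omega⟩⟩
  have hB'ne : B'.Nonempty := by
    obtain ⟨b, hb⟩ := hB
    exact ⟨(b, 0), (memB' (b, 0)).mpr ⟨hb, by
      show EK19.pval p t (0 : Fin t → ZMod p) < m₂ b
      have h0 : EK19.pval p t (0 : Fin t → ZMod p) = 0 := by simp [EK19.pval]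
      have := hm₂ b hb
      omega⟩⟩
  have hsub : A' + B' ⊆ T' := by
    intro z hz
    obtain ⟨u, hu, v, hv, rfl⟩ := Finset.mem_add.mp hz
    obtain ⟨hu1, hu2⟩ := (memA' u).mp hu
    obtain ⟨hv1, hv2⟩ := (memB' v).mp hv
    have hc : u.1 + v.1 ∈ A + B := Finset.add_mem_add hu1 hv1
    rw [hT'def]
    apply Finset.mem_biUnion.mpr
    refine ⟨u.1 + v.1, hc, Finset.mem_image.mpr ⟨u.2 + v.2, ?_, rfl⟩⟩
    rw [EK19.mem_pseg]
    have h3 : m₁ u.1 + m₂ v.1 - 1 ≤ m₃ (u.1 + v.1) := by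
      rw [hm₃ _ hc]
      have hmem : (u.1, v.1) ∈ (A ×ˢ B).filter (fun ab => ab.1 + ab.2 = u.1 + v.1) := by
        simp only [Finset.mem_filter, Finset.mem_product]
        exact ⟨⟨hu1, hv1⟩, trivial⟩
      exact Finset.le_sup (f := fun ab : V × V => m₁ ab.1 + m₂ ab.2 - 1) hmem
    have h4 := EK19.pval_add_le p t u.2 v.2
    have h5 := hm₁ u.1 hu1
    have h6 := hm₂ v.1 hv1
    omega
  have cardT' : T'.card ≤ ∑ c ∈ A + B, m₃ c := by
    refine le_trans Finset.card_biUnion_le (Finset.sum_le_sum fun c hc => ?_)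
    exact le_trans Finset.card_image_le (EK19.card_pseg_le p t (m₃ c))
  -- embed the span of A' ∪ B' into a finite field of characteristic p
  set W : Submodule (ZMod p) VV := Submodule.span (ZMod p) ((↑(A' ∪ B') : Set VV))
    with hWdef
  set K : Type _ := GaloisField p (Module.finrank (ZMod p) ↥W + 1) with hKdef
  obtain ⟨φ, hφ⟩ := EK19.span_embed p ((↑(A' ∪ B') : Set VV)) (Finset.finite_toSet _)
  have hAW : ∀ z ∈ A', z ∈ W := fun z hz =>
    Submodule.subset_span (by
      rw [Finset.coe_union]
      exact Set.mem_union_left _ (Finset.mem_coe.mpr hz))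
  have hBW : ∀ z ∈ B', z ∈ W := fun z hz =>
    Submodule.subset_span (by
      rw [Finset.coe_union]
      exact Set.mem_union_right _ (Finset.mem_coe.mpr hz))
  set up : VV → W := fun v => if h : v ∈ W then (⟨v, h⟩ : W) else 0 with hupdef
  have hup : ∀ (v : VV) (h : v ∈ W), ((up v : W) : VV) = v := by
    intro v h
    rw [hupdef]
    simp [h]
  set down : W →+ VV := (Submodule.subtype W).toAddMonoidHom with hdowndef
  have hdowninj : Function.Injective down := fun x y h => Subtype.ext h
  have hdownup : ∀ z ∈ A' ∪ B', down (up z) = z := by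
    intro z hz
    have hzW : z ∈ W := Submodule.subset_span (Finset.mem_coe.mpr hz)
    exact hup z hzW
  set A'' : Finset W := A'.image up with hA''def
  set B'' : Finset W := B'.image up with hB''def
  have hdownA : A''.image down = A' := by
    rw [hA''def, Finset.image_image]
    calc A'.image (down ∘ up) = A'.image id :=
      Finset.image_congr (fun z hz => hdownup z (Finset.mem_union_left _ hz))
    _ = A' := Finset.image_id
  have hdownB : B''.image down = B' := by
    rw [hB''def, Finset.image_image]
    calc B'.image (down ∘ up) = B'.image id :=
      Finset.image_congr (fun z hz => hdownup z (Finset.mem_union_right _ hz))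
    _ = B' := Finset.image_id
  have cardA'' : A''.card = A'.card := by
    rw [← hdownA, Finset.card_image_of_injective _ hdowninj]
  have cardB'' : B''.card = B'.card := by
    rw [← hdownB, Finset.card_image_of_injective _ hdowninj]
  have hsumdown : (A'' + B'').image down = A' + B' := by
    rw [Finset.image_add, hdownA, hdownB]
  have cardsum : (A'' + B'').card = (A' + B').card := by
    rw [← hsumdown, Finset.card_image_of_injective _ hdowninj]
  set Abar : Finset K := A''.image φ with hAbardef
  set Bbar : Finset K := B''.image φ with hBbardef
  have cardAbar : Abar.card = r := by
    rw [hAbardef, Finset.card_image_of_injective _ hφ, cardA'', cardA']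
  have cardBbar : Bbar.card = s := by
    rw [hBbardef, Finset.card_image_of_injective _ hφ, cardB'', cardB']
  have hsumφ : Abar + Bbar = (A'' + B'').image φ := (Finset.image_add φ).symm
  have cardsumbar : (Abar + Bbar).card = (A' + B').card := by
    rw [hsumφ, Finset.card_image_of_injective _ hφ, cardsum]
  have hAbarne : Abar.Nonempty := by
    obtain ⟨a, ha⟩ := hA'ne
    exact ⟨φ (up a), Finset.mem_image.mpr ⟨up a, Finset.mem_image.mpr ⟨a, ha, rfl⟩, rfl⟩⟩
  have hBbarne : Bbar.Nonempty := by
    obtain ⟨b, hb⟩ := hB'ne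
    exact ⟨φ (up b), Finset.mem_image.mpr ⟨up b, Finset.mem_image.mpr ⟨b, hb, rfl⟩, rfl⟩⟩
  have hHS := EK19.ekfield (K := K) p Abar Bbar hAbarne hBbarne
  rw [cardAbar, cardBbar, cardsumbar] at hHS
  have hle : betaHS p r s ≤ (A' + B').card := Nat.sInf_le hHS
  calc betaHS p r s ≤ (A' + B').card := hle
  _ ≤ T'.card := Finset.card_le_card hsub
  _ ≤ ∑ c ∈ A + B, m₃ c := cardT'
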